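/- Let X₁,...,Xₙ be i.i.d. real random variables distributed as X, Sₙ = X₁+⋯+Xₙ. Suppose there exist C > 0 and a non-decreasing sequence (bₙ) such that for all n, all x ≥ 0, and all y ≥ bₙ: P(|Sₙ| > x, |X₁| ≤ y,…,|Xₙ| ≤ y) ≤ C·exp(−x/y), and suppose supₙ n·P(|X| > bₙ) =: K < ∞. Then for the truncated sum Sₙ^{(y)} = Σₖ Xₖ·1_{|Xₖ| ≤ y}, one has P(|Sₙ^{(y)}| > x) ≤ C·e^K·exp(−x/y) for all n, all x ≥ 0, and all y ≥ bₙ. -/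

import Mathlib

open MeasureTheory ProbabilityTheory Filter

section Helpers

variable {Ω : Type*} [MeasurableSpace Ω] (μ : Measure Ω) [IsProbabilityMeasure μ]
    (X : ℕ → Ω → ℝ)

lemma aux_map_pi (hXmeas : ∀ i, Measurable (X i))
    (hiid : iIndepFun X μ)
    (hident : ∀ i j, IdentDistrib (X i) (X j) μ μ) {m : ℕ} (g : Fin m → ℕ) (hg : Function.Injective g) :
    μ.map (fun ω (i : Fin m) => X (g i) ω) = Measure.pi (fun _ : Fin m => μ.map (X 0)) := by
  haveI : IsProbabilityMeasure (μ.map (X 0)) :=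
    Measure.isProbabilityMeasure_map (hXmeas 0).aemeasurable
  refine (Measure.pi_eq fun B hB => ?_).symm
  classical
  set B' : ℕ → Set ℝ := fun k => if h : ∃ i, g i = k then B h.choose else Set.univ with hB'def
  have hB'g : ∀ i, B' (g i) = B i := by
    intro i
    have h : ∃ j, g j = g i := ⟨i, rfl⟩
    simp only [hB'def, dif_pos h]
    exact congrArg B (hg h.choose_spec)
  have hB'meas : ∀ k, MeasurableSet (B' k) := by
    intro k
    simp only [hB'def]
    split
    · exact hB _
    · exact MeasurableSet.univ
  rw [Measure.map_apply (measurable_pi_lambda _ fun i => hXmeas (g i))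
    (MeasurableSet.univ_pi hB)]
  have hpre : (fun ω (i : Fin m) => X (g i) ω) ⁻¹' (Set.pi Set.univ B)
      = ⋂ k ∈ Finset.image g Finset.univ, X k ⁻¹' (B' k) := by
    ext ω
    simp only [Set.mem_preimage, Set.mem_pi, Set.mem_univ, forall_true_left, Set.mem_iInter,
      Finset.mem_image, Finset.mem_univ, true_and]
    constructor
    · rintro h k ⟨i, rfl⟩
      rw [hB'g]; exact h i
    · intro h i
      have := h (g i) ⟨i, rfl⟩
      rwa [hB'g] at this
  rw [hpre, hiid.meas_biInter (fun k _ => ⟨B' k, hB'meas k, rfl⟩),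
    Finset.prod_image (fun i _ j _ h => hg h)]
  refine Finset.prod_congr rfl fun i _ => ?_
  rw [hB'g i, ← Measure.map_apply (hXmeas (g i)) (hB i), (hident (g i) 0).map_eq]

lemma aux_meas_eq (hXmeas : ∀ i, Measurable (X i))
    (hiid : iIndepFun X μ)
    (hident : ∀ i j, IdentDistrib (X i) (X j) μ μ) {m : ℕ} (g : Fin m → ℕ) (hg : Function.Injective g) (x y : ℝ) :
    μ {ω | x < |∑ i : Fin m, X (g i) ω| ∧ ∀ i : Fin m, |X (g i) ω| ≤ y}
      = μ {ω | x < |∑ k ∈ Finset.range m, X k ω| ∧ ∀ k ∈ Finset.range m, |X k ω| ≤ y} := by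
  set S : Set (Fin m → ℝ) := {v | x < |∑ i, v i| ∧ ∀ i, |v i| ≤ y} with hSdef
  have hS : MeasurableSet S := by
    have : S = {v : Fin m → ℝ | x < |∑ i, v i|} ∩ ⋂ i, {v : Fin m → ℝ | |v i| ≤ y} := by
      ext v; simp [hSdef, Set.mem_iInter]
    rw [this]
    exact (measurableSet_lt measurable_const
        ((Finset.measurable_sum _ fun i _ => measurable_pi_apply i).abs)).inter
      (MeasurableSet.iInter fun i =>
        measurableSet_le (measurable_pi_apply i).abs measurable_const)
  have key : ∀ (g' : Fin m → ℕ), Function.Injective g' →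
      μ {ω | x < |∑ i : Fin m, X (g' i) ω| ∧ ∀ i : Fin m, |X (g' i) ω| ≤ y}
        = Measure.pi (fun _ : Fin m => μ.map (X 0)) S := by
    intro g' hg'
    have : {ω | x < |∑ i : Fin m, X (g' i) ω| ∧ ∀ i : Fin m, |X (g' i) ω| ≤ y}
        = (fun ω (i : Fin m) => X (g' i) ω) ⁻¹' S := rfl
    rw [this, ← Measure.map_apply (measurable_pi_lambda _ fun i => hXmeas (g' i)) hS,
      aux_map_pi μ X hXmeas hiid hident g' hg']
  have h1 := key g hg
  have h2 := key (fun i : Fin m => (i : ℕ)) Fin.val_injective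
  rw [h1, ← h2]
  congr 1
  ext ω
  simp only [Set.mem_setOf_eq, Finset.mem_range]
  rw [← Fin.sum_univ_eq_sum_range (fun k => X k ω) m]
  constructor
  · rintro ⟨h, h'⟩
    exact ⟨h, fun k hk => h' ⟨k, hk⟩⟩
  · rintro ⟨h, h'⟩
    exact ⟨h, fun i => h' i i.isLt⟩

end Helpers

theorem stmt_1 {Ω : Type*} [MeasurableSpace Ω] (μ : Measure Ω) [IsProbabilityMeasure μ]
    (X : ℕ → Ω → ℝ) (hXmeas : ∀ i, Measurable (X i))
    (hiid : iIndepFun X μ)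
    (hident : ∀ i j, IdentDistrib (X i) (X j) μ μ)
    (b : ℕ → ℝ) (hb : Monotone b)
    (C K : ℝ) (hC : 0 < C)
    (hbound : ∀ (n : ℕ) (x y : ℝ), 0 ≤ x → b n ≤ y →
      (μ {ω | x < |∑ k ∈ Finset.range n, X k ω| ∧ ∀ k ∈ Finset.range n, |X k ω| ≤ y}).toReal
        ≤ C * Real.exp (-x / y))
    (hK : ∀ n : ℕ, (n : ℝ) * (μ {ω | b n < |X 0 ω|}).toReal ≤ K) :
    ∀ (n : ℕ) (x y : ℝ), 0 ≤ x → b n ≤ y →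
      (μ {ω | x < |∑ k ∈ Finset.range n, if |X k ω| ≤ y then X k ω else 0|}).toReal
        ≤ C * Real.exp K * Real.exp (-x / y) := by
  intro n x y hx hy
  classical
  set p : ℝ := (μ {ω | b n < |X 0 ω|}).toReal with hpdef
  have hp0 : 0 ≤ p := ENNReal.toReal_nonneg
  have hCe : 0 ≤ C * Real.exp (-x / y) := le_of_lt (mul_pos hC (Real.exp_pos _))
  set P := (Finset.range n).powerset with hPdef
  set F : Finset ℕ → Set Ω := fun A =>
    {ω | x < |∑ k ∈ Finset.range n \ A, X k ω| ∧ ∀ k ∈ Finset.range n \ A, |X k ω| ≤ y}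
    with hFdef
  set G : Finset ℕ → Set Ω := fun A => ⋂ k ∈ A, {ω | y < |X k ω|} with hGdef
  -- Step 1: covering
  have hcover : {ω | x < |∑ k ∈ Finset.range n, if |X k ω| ≤ y then X k ω else 0|}
      ⊆ ⋃ A ∈ P, F A ∩ G A := by
    intro ω hω
    set A : Finset ℕ := (Finset.range n).filter (fun k => ¬ |X k ω| ≤ y) with hAdef
    have hsd : Finset.range n \ A = (Finset.range n).filter (fun k => |X k ω| ≤ y) := by
      ext k
      simp only [hAdef, Finset.mem_sdiff, Finset.mem_filter, not_and, not_not]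
      tauto
    have hAsub : A ⊆ Finset.range n := by
      intro k hk
      rw [hAdef] at hk
      exact Finset.mem_of_mem_filter k hk
    refine Set.mem_biUnion (Finset.mem_powerset.mpr hAsub) ?_
    refine ⟨⟨?_, ?_⟩, ?_⟩
    · rw [hsd, Finset.sum_filter]
      exact hω
    · intro k hk
      rw [hsd] at hk
      exact (Finset.mem_filter.mp hk).2
    · refine Set.mem_iInter₂.mpr fun k hk => ?_
      exact not_le.mp (Finset.mem_filter.mp hk).2
  -- Step 2: per-A bound
  have hFA : ∀ A ∈ P, (μ (F A)).toReal ≤ C * Real.exp (-x / y) := by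
    intro A hA
    set s := Finset.range n \ A with hsdef
    set m := s.card with hmdef
    have hmn : m ≤ n := by
      calc m ≤ (Finset.range n).card := Finset.card_le_card (Finset.sdiff_subset)
        _ = n := Finset.card_range n
    set e := s.orderIsoOfFin rfl with hedef
    set g : Fin m → ℕ := fun i => (e i : ℕ) with hgdef
    have hg : Function.Injective g := fun i j h => e.injective (Subtype.ext h)
    have hFeq : F A = {ω | x < |∑ i : Fin m, X (g i) ω| ∧ ∀ i : Fin m, |X (g i) ω| ≤ y} := by
      ext ω
      have hsum : ∑ k ∈ s, X k ω = ∑ i : Fin m, X (g i) ω := by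
        rw [← Finset.sum_coe_sort s (fun k => X k ω)]
        exact (Fintype.sum_equiv e.toEquiv _ _ (fun i => rfl)).symm
      simp only [hFdef, Set.mem_setOf_eq, ← hsdef, hsum]
      constructor
      · rintro ⟨h, h'⟩
        exact ⟨h, fun i => h' (g i) (e i).2⟩
      · rintro ⟨h, h'⟩
        refine ⟨h, fun k hk => ?_⟩
        have : g (e.symm ⟨k, hk⟩) = k := congrArg Subtype.val (e.apply_symm_apply ⟨k, hk⟩)
        rw [← this]; exact h' _
    rw [hFeq, aux_meas_eq μ X hXmeas hiid hident g hg x y]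
    exact hbound m x y hx (le_trans (hb hmn) hy)
  have hGA : ∀ A ∈ P, (μ (G A)).toReal ≤ p ^ A.card := by
    intro A hA
    have hmeas : ∀ k ∈ A, MeasurableSet[(inferInstance : MeasurableSpace ℝ).comap (X k)]
        {ω | y < |X k ω|} :=
      fun k _ => ⟨{t : ℝ | y < |t|}, measurableSet_lt measurable_const measurable_id.abs, rfl⟩
    rw [hGdef]
    rw [hiid.meas_biInter hmeas, ENNReal.toReal_prod]
    calc ∏ k ∈ A, (μ {ω | y < |X k ω|}).toReal
        ≤ ∏ k ∈ A, p := by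
          refine Finset.prod_le_prod (fun k _ => ENNReal.toReal_nonneg) (fun k hk => ?_)
          have hsub : {ω | y < |X k ω|} ⊆ {ω | b n < |X k ω|} :=
            fun ω h => lt_of_le_of_lt hy h
          have heq : μ {ω | b n < |X k ω|} = μ {ω | b n < |X 0 ω|} := by
            have hS : MeasurableSet {t : ℝ | b n < |t|} :=
              measurableSet_lt measurable_const measurable_id.abs
            calc μ {ω | b n < |X k ω|} = (μ.map (X k)) {t | b n < |t|} :=
                  (Measure.map_apply (hXmeas k) hS).symm
              _ = (μ.map (X 0)) {t | b n < |t|} := by rw [(hident k 0).map_eq]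
              _ = μ {ω | b n < |X 0 ω|} := Measure.map_apply (hXmeas 0) hS
          rw [hpdef]
          exact ENNReal.toReal_mono (measure_ne_top μ _) (heq ▸ measure_mono hsub)
      _ = p ^ A.card := Finset.prod_const p
  have hsplit : ∀ A ∈ P, (μ (F A ∩ G A)).toReal = (μ (F A)).toReal * (μ (G A)).toReal := by
    intro A hA
    set s := Finset.range n \ A with hsdef
    have hdisj : Disjoint s A := Finset.sdiff_disjoint
    have hindep := hiid.indepFun_finset s A hdisj hXmeas
    set S₁ : Set ((i : s) → ℝ) := {v | x < |∑ i, v i| ∧ ∀ i, |v i| ≤ y} with hS₁def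
    set S₂ : Set ((i : A) → ℝ) := {v | ∀ i, y < |v i|} with hS₂def
    have hS₁ : MeasurableSet S₁ := by
      have : S₁ = {v : (i : s) → ℝ | x < |∑ i, v i|} ∩ ⋂ i, {v : (i : s) → ℝ | |v i| ≤ y} := by
        ext v; simp [hS₁def, Set.mem_iInter]
      rw [this]
      exact (measurableSet_lt measurable_const
          ((Finset.measurable_sum _ fun i _ => measurable_pi_apply i).abs)).inter
        (MeasurableSet.iInter fun i =>
          measurableSet_le (measurable_pi_apply i).abs measurable_const)
    have hS₂ : MeasurableSet S₂ := by
      have : S₂ = ⋂ i, {v : (i : A) → ℝ | y < |v i|} := by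
        ext v; simp [hS₂def, Set.mem_iInter]
      rw [this]
      exact MeasurableSet.iInter fun i =>
        measurableSet_lt measurable_const (measurable_pi_apply i).abs
    have hF : F A = (fun ω (i : s) => X i ω) ⁻¹' S₁ := by
      ext ω
      simp only [hFdef, Set.mem_setOf_eq, ← hsdef, Set.mem_preimage, hS₁def,
        ← Finset.sum_coe_sort s (fun k => X k ω)]
      constructor
      · rintro ⟨h, h'⟩
        exact ⟨h, fun i => h' i i.2⟩
      · rintro ⟨h, h'⟩
        exact ⟨h, fun k hk => h' ⟨k, hk⟩⟩
    have hG : G A = (fun ω (i : A) => X i ω) ⁻¹' S₂ := by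
      ext ω
      simp only [hGdef, Set.mem_iInter, Set.mem_setOf_eq, Set.mem_preimage, hS₂def]
      constructor
      · intro h i
        exact h i i.2
      · intro h k hk
        exact h ⟨k, hk⟩
    rw [hF, hG, hindep.measure_inter_preimage_eq_mul _ _ hS₁ hS₂, ENNReal.toReal_mul]
  -- Step 3: combine
  have hmain : (μ {ω | x < |∑ k ∈ Finset.range n, if |X k ω| ≤ y then X k ω else 0|}).toReal
      ≤ ∑ A ∈ P, (μ (F A ∩ G A)).toReal := by
    have h1 : μ {ω | x < |∑ k ∈ Finset.range n, if |X k ω| ≤ y then X k ω else 0|}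
        ≤ ∑ A ∈ P, μ (F A ∩ G A) :=
      le_trans (measure_mono hcover) (measure_biUnion_finset_le P _)
    have h2 : ∑ A ∈ P, μ (F A ∩ G A) ≠ ⊤ :=
      (ENNReal.sum_lt_top.mpr fun A _ => measure_lt_top μ _).ne
    calc (μ _).toReal ≤ (∑ A ∈ P, μ (F A ∩ G A)).toReal := ENNReal.toReal_mono h2 h1
      _ = ∑ A ∈ P, (μ (F A ∩ G A)).toReal := ENNReal.toReal_sum fun A _ => measure_ne_top μ _
  calc (μ {ω | x < |∑ k ∈ Finset.range n, if |X k ω| ≤ y then X k ω else 0|}).toReal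
      ≤ ∑ A ∈ P, (μ (F A ∩ G A)).toReal := hmain
    _ ≤ ∑ A ∈ P, C * Real.exp (-x / y) * p ^ A.card := by
        refine Finset.sum_le_sum fun A hA => ?_
        rw [hsplit A hA]
        exact mul_le_mul (hFA A hA) (hGA A hA) ENNReal.toReal_nonneg hCe
    _ = C * Real.exp (-x / y) * ∑ A ∈ P, p ^ A.card := by rw [Finset.mul_sum]
    _ = C * Real.exp (-x / y) * (p + 1) ^ n := by
        congr 1
        have := Finset.prod_add (fun _ : ℕ => p) (fun _ : ℕ => 1) (Finset.range n)
        simp only [Finset.prod_const, Finset.card_range, mul_one, one_pow] at this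
        rw [← this]
    _ ≤ C * Real.exp (-x / y) * Real.exp K := by
        refine mul_le_mul_of_nonneg_left ?_ hCe
        calc (p + 1) ^ n ≤ Real.exp p ^ n := by
              refine pow_le_pow_left₀ (by linarith) ?_ n
              linarith [Real.add_one_le_exp p]
          _ = Real.exp (n * p) := (Real.exp_nat_mul p n).symm
          _ ≤ Real.exp K := Real.exp_le_exp.mpr (hK n)
    _ = C * Real.exp K * Real.exp (-x / y) := by ring
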